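/- Let C = (L_1, L_2, ...) be a countable collection of languages, let m*_n(L_i) be the noisy non-uniform complexities computed by Procedure 2, and let f : ℕ → ℕ be any non-decreasing function with f(t) → ∞ as t → ∞. Then there exists an algorithm G that noisily non-uniformly generates from C with times t_{n,G}(L_i) ≤ max(g(n, i), m*_n(L_i) + 1) for every noise level n ≥ 0 and index i ≥ 1, where g(n, i) is the smallest number j satisfying f(j) ≥ |diag(C_{n,i})|. -/

import Mathlib

/-- The successor of a grid entry `(n, c)` (noise level `n`, 0-based language index `c`)
in the diagonal traversal order `(0,0), (1,0), (0,1), (2,0), (1,1), (0,2), ...`. -/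
def nextEnt : ℕ × ℕ → ℕ × ℕ :=
  fun p => if p.1 = 0 then (p.2 + 1, 0) else (p.1 - 1, p.2 + 1)

/-- The `l`-th grid entry (0-based) in the diagonal traversal order; `ent l = (n, c)`
stands for the copy `L_{n, c+1}` of the language `L (c)` at noise level `n`. -/
def ent : ℕ → ℕ × ℕ := fun l => nextEnt^[l] (0, 0)

/-- The 0-based position of the grid entry `(n, c)` in the diagonal traversal, so that
`|diag(C_{n, c+1})| = gridIdx n c + 1`. -/
def gridIdx (n c : ℕ) : ℕ := (n + c) * (n + c + 1) / 2 + c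

/-- `Lang` `a`-contains the finite set `T`: at most `a` elements of `T` lie outside
`Lang`. -/
def AContains (Lang : Set ℕ) (a : ℕ) (T : Finset ℕ) : Prop :=
  ((↑T : Set ℕ) \ Lang).ncard ≤ a

/-- A valid pair `(s, T)` for Step A of Procedure 2: `s` is a subcollection (a finite
set of grid entries, drawn from the prefix `pre` or equal to `last`) containing `last`,
such that for every entry `(a, b) ∈ s` the set `T` is `a`-contained in `L b`, and the
intersection of the languages of `s` is finite. -/
def ValidSubN (L : ℕ → Set ℕ) (pre : List (ℕ × ℕ)) (last : ℕ × ℕ)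
    (s : Finset (ℕ × ℕ)) (T : Finset ℕ) : Prop :=
  last ∈ s ∧ (∀ p ∈ s, p = last ∨ p ∈ pre) ∧
    (∀ p ∈ s, AContains (L p.2) p.1 T) ∧ (⋂ p ∈ s, L p.2).Finite

/-- `m` is the value `m_chk` of Step A of Procedure 2: the largest size of a valid
witness set `T` (and `0` if none exists). -/
def IsMchkN (L : ℕ → Set ℕ) (pre : List (ℕ × ℕ)) (last : ℕ × ℕ) (m : ℕ) : Prop :=
  ((¬ ∃ s T, ValidSubN L pre last s T) ∧ m = 0) ∨
    ((∃ s T, ValidSubN L pre last s T ∧ T.card = m) ∧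
      ∀ s T, ValidSubN L pre last s T → T.card ≤ m)

/-- `(sC, sT)` witness `m = m_chk` in Step A of Procedure 2 (with everything empty and
`m = 0` if no valid pair exists). -/
def WitnessAtN (L : ℕ → Set ℕ) (pre : List (ℕ × ℕ)) (last : ℕ × ℕ)
    (sC : Finset (ℕ × ℕ)) (sT : Finset ℕ) (m : ℕ) : Prop :=
  ((¬ ∃ s T, ValidSubN L pre last s T) ∧ sC = ∅ ∧ sT = ∅ ∧ m = 0) ∨
    (ValidSubN L pre last sC sT ∧ sT.card = m ∧
      ∀ s T, ValidSubN L pre last s T → T.card ≤ m)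

/-- A run of Procedure 2 (insertion sort for noisy non-uniform generation) on the
collection `L 0, L 1, ...` (0-based: column `c` of the grid is language `L c`, i.e. the
paper's `L_{c+1}`). `ord l` is the maintained ordering `C'_l` of the first `l` grid
entries, `pos l` is the (0-based) position at which the grid entry `ent l` is finally
inserted during iteration `l + 1`, and `witT (n, c)`, `witC (n, c)`, `mstar (n, c)` are
`T(L_{n, c+1})`, `C(L_{n, c+1})` and `m*_n(L_{c+1})`. -/
structure Proc2Run (L : ℕ → Set ℕ) where
  ord : ℕ → List (ℕ × ℕ)
  pos : ℕ → ℕ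
  witT : ℕ × ℕ → Finset ℕ
  witC : ℕ × ℕ → Finset (ℕ × ℕ)
  mstar : ℕ × ℕ → ℕ
  ord_zero : ord 0 = []
  pos_le : ∀ l, pos l ≤ l
  ord_succ : ∀ l, ord (l + 1) = (ord l).take (pos l) ++ ent l :: (ord l).drop (pos l)
  /-- While moving the entry `ent l` forward through each intermediate position `q` with
  `pos l < q ≤ l`, the while loop did not break. -/
  moved : ∀ l q, pos l < q → q ≤ l →
    ∀ m, IsMchkN L ((ord l).take q) (ent l) m → m ≤ mstar ((ord l).getD (q - 1) (0, 0))
  /-- At the final position the while loop broke. -/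
  stopped : ∀ l, pos l = 0 ∨ mstar ((ord l).getD (pos l - 1) (0, 0)) < mstar (ent l)
  wit_spec : ∀ l,
    WitnessAtN L ((ord l).take (pos l)) (ent l) (witC (ent l)) (witT (ent l))
      (mstar (ent l))

lemma ent_succ (l : ℕ) : ent (l + 1) = nextEnt (ent l) := by
  simp [ent, Function.iterate_succ_apply']

lemma tri_succ (d : ℕ) : (d + 1) * (d + 2) / 2 = d * (d + 1) / 2 + (d + 1) := by
  obtain ⟨k, hk⟩ := Nat.even_mul_succ_self d
  have h2 : (d + 1) * (d + 2) = d * (d + 1) + 2 * (d + 1) := by ring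
  omega

lemma gridIdx_zero_zero : gridIdx 0 0 = 0 := by decide

lemma gridIdx_row (m : ℕ) : gridIdx (m + 1) 0 = gridIdx 0 m + 1 := by
  simp only [gridIdx, Nat.add_zero, Nat.zero_add]
  have := tri_succ m
  have h1 : m + 1 + 1 = m + 2 := rfl
  rw [h1]
  omega

lemma gridIdx_step (n c : ℕ) : gridIdx n (c + 1) = gridIdx (n + 1) c + 1 := by
  simp only [gridIdx]
  have : n + (c+1) = (n+1) + c := by omega
  rw [this]
  omega

lemma ent_gridIdx (n c : ℕ) : ent (gridIdx n c) = (n, c) := by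
  generalize hl : gridIdx n c = l
  induction l using Nat.strong_induction_on generalizing n c with
  | _ l ih =>
    match c, n with
    | 0, 0 => simpa [gridIdx_zero_zero] using hl.symm ▸ rfl
    | 0, m + 1 =>
      have h := gridIdx_row m
      have hlt : gridIdx 0 m < l := by omega
      have := ih (gridIdx 0 m) hlt 0 m rfl
      have hl' : l = gridIdx 0 m + 1 := by omega
      rw [hl', ent_succ, this]
      simp [nextEnt]
    | c + 1, n =>
      have h := gridIdx_step n c
      have hlt : gridIdx (n+1) c < l := by omega
      have := ih (gridIdx (n+1) c) hlt (n+1) c rfl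
      have hl' : l = gridIdx (n+1) c + 1 := by omega
      rw [hl', ent_succ, this]
      simp [nextEnt]

section AuxLemmas

variable {L : ℕ → Set ℕ} (R : Proc2Run L)

lemma ord_length : ∀ l, (R.ord l).length = l := by
  intro l
  induction l with
  | zero => simp [R.ord_zero]
  | succ l ih =>
    rw [R.ord_succ l]
    have h := R.pos_le l
    simp [List.length_take, List.length_drop, ih]
    omega

lemma mem_ord_of_lt {l' l : ℕ} (h : l' < l) : ent l' ∈ R.ord l := by
  induction l with
  | zero => omega
  | succ l ih =>
    rw [R.ord_succ l]
    rcases Nat.lt_succ_iff_lt_or_eq.mp h with h' | h'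
    · have := ih h'
      rw [← List.take_append_drop (R.pos l) (R.ord l)] at this
      rcases List.mem_append.mp this with h'' | h''
      · exact List.mem_append.mpr (Or.inl h'')
      · exact List.mem_append.mpr (Or.inr (List.mem_cons_of_mem _ h''))
    · subst h'
      exact List.mem_append.mpr (Or.inr List.mem_cons_self)

end AuxLemmas

noncomputable def gbound (L : ℕ → Set ℕ) (C : Finset (ℕ × ℕ)) : ℕ :=
  (⋂ p ∈ C, L p.2).ncard + ∑ p ∈ C, p.1

/-- Step A always has a well-defined value `m_chk`. -/
lemma exists_mchk (L : ℕ → Set ℕ) (pre : List (ℕ × ℕ)) (last : ℕ × ℕ) :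
    ∃ m, IsMchkN L pre last m := by
  classical
  by_cases hv : ∃ s T, ValidSubN L pre last s T
  · set V : Set ℕ := {m | ∃ s T, ValidSubN L pre last s T ∧ T.card = m} with hV
    have hVne : V.Nonempty := by
      obtain ⟨s, T, h⟩ := hv
      exact ⟨T.card, s, T, h, rfl⟩
    have hbdd : BddAbove V := by
      set P : Finset (Finset (ℕ × ℕ)) := (insert last pre.toFinset).powerset with hP
      refine ⟨P.sup (gbound L), ?_⟩
      rintro m ⟨s, T, ⟨hlast, hsub, hcont, hfin⟩, rfl⟩
      have hsP : s ∈ P := by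
        rw [hP, Finset.mem_powerset]
        intro p hp
        rcases hsub p hp with h | h
        · simp [h]
        · simp [List.mem_toFinset.mpr h]
      have hncard : (⋂ p ∈ (s : Finset (ℕ × ℕ)), L p.2).ncard = hfin.toFinset.card :=
        Set.ncard_eq_toFinset_card _ hfin
      have hTle : T.card ≤ gbound L s := by
        rw [gbound, hncard]
        have hsubT : T ⊆ hfin.toFinset ∪ s.biUnion (fun p => T.filter (fun y => y ∉ L p.2)) := by
          intro y hy
          by_cases hall : ∀ p ∈ s, y ∈ L p.2
          · refine Finset.mem_union_left _ ?_
            simp only [Set.Finite.mem_toFinset, Set.mem_iInter]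
            intro p; exact fun hp => hall p hp
          · push_neg at hall
            obtain ⟨p, hp, hyp⟩ := hall
            refine Finset.mem_union_right _ ?_
            exact Finset.mem_biUnion.mpr ⟨p, hp, Finset.mem_filter.mpr ⟨hy, hyp⟩⟩
        calc T.card ≤ (hfin.toFinset ∪ s.biUnion (fun p => T.filter (fun y => y ∉ L p.2))).card :=
              Finset.card_le_card hsubT
          _ ≤ hfin.toFinset.card + (s.biUnion (fun p => T.filter (fun y => y ∉ L p.2))).card :=
              Finset.card_union_le _ _
          _ ≤ hfin.toFinset.card + ∑ p ∈ s, (T.filter (fun y => y ∉ L p.2)).card := by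
              gcongr; exact Finset.card_biUnion_le
          _ ≤ hfin.toFinset.card + ∑ p ∈ s, p.1 := by
              gcongr with p hp
              have := hcont p hp
              rw [AContains] at this
              have hset : ((T : Set ℕ) \ L p.2).ncard = (T.filter (fun y => y ∉ L p.2)).card := by
                rw [← Set.ncard_coe_finset]
                congr 1
                ext y
                simp [Finset.mem_filter, Set.mem_diff]
              omega
      exact hTle.trans (Finset.le_sup hsP)
    refine ⟨sSup V, Or.inr ⟨?_, ?_⟩⟩
    · obtain ⟨s, T, h, hc⟩ := Nat.sSup_mem hVne hbdd
      exact ⟨s, T, h, hc⟩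
    · intro s T h
      exact le_csSup hbdd ⟨s, T, h, rfl⟩
  · exact ⟨0, Or.inl ⟨hv, rfl⟩⟩

/-- The input prefix `x_1, ..., x_t` presented to the algorithm at time `t`. -/
def inputList (x : ℕ → ℕ) (t : ℕ) : List ℕ := (List.range t).map x

/-- `S_t`: the set of distinct strings among the first `t` inputs. -/
def Sfin (x : ℕ → ℕ) (t : ℕ) : Finset ℕ := (inputList x t).toFinset

/-- `x` is an enumeration of the language `Lang` at noise level `n`: every string of
`Lang` appears at some finite time, and at most `n` time steps carry a string outside
`Lang`. -/
def IsNoisyEnumOf (x : ℕ → ℕ) (Lang : Set ℕ) (n : ℕ) : Prop :=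
  (∀ s ∈ Lang, ∃ t, x t = s) ∧
    {t : ℕ | x t ∉ Lang}.Finite ∧ {t : ℕ | x t ∉ Lang}.ncard ≤ n

/-- `G` noisily non-uniformly generates from the collection `L` with times
`tG n c` (noise level `n`, language `L c`). -/
def NoisyNonUniformGen (G : List ℕ → ℕ) (L : ℕ → Set ℕ) (tG : ℕ → ℕ → ℕ) : Prop :=
  ∀ c n (x : ℕ → ℕ), IsNoisyEnumOf x (L c) n → ∀ t, 1 ≤ t → tG n c ≤ (Sfin x t).card →
    G (inputList x t) ∈ L c \ ↑(Sfin x t)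

noncomputable def Dset (L : ℕ → Set ℕ) (R : Proc2Run L) (f : ℕ → ℕ) (w : List ℕ) :
    Finset (ℕ × ℕ) :=
  @Finset.filter _
    (fun e => AContains (L e.2) e.1 w.toFinset ∧ R.mstar e < w.toFinset.card)
    (Classical.decPred _) (((List.range (f w.toFinset.card)).map ent).toFinset)

open Classical in
noncomputable def Galg (L : ℕ → Set ℕ) (R : Proc2Run L) (f : ℕ → ℕ) (w : List ℕ) : ℕ :=
  if h : ((⋂ e ∈ Dset L R f w, L e.2) \ ↑w.toFinset).Nonempty then h.choose else 0

lemma Galg_spec (L : ℕ → Set ℕ) (R : Proc2Run L) (f : ℕ → ℕ) (w : List ℕ)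
    (h : ((⋂ e ∈ Dset L R f w, L e.2) \ ↑w.toFinset).Nonempty) :
    Galg L R f w ∈ (⋂ e ∈ Dset L R f w, L e.2) \ ↑w.toFinset := by
  rw [Galg, dif_pos h]
  exact h.choose_spec

/-- Theorem 4.2: noisy generation times. For any non-decreasing
`f : ℕ → ℕ` tending to infinity there is an algorithm noisily non-uniformly generating
from `L` with times `t*_n(L_i) ≤ max (g n c) (m*_n(L_i) + 1)`, where `g n c` is the
smallest `j` with `f j ≥ |diag(C_{n, c+1})| = gridIdx n c + 1`. -/
theorem stmt_14 (L : ℕ → Set ℕ) (hL : ∀ i, (L i).Infinite) (R : Proc2Run L)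
    (f : ℕ → ℕ) (hf : Monotone f)
    (hftop : Filter.Tendsto f Filter.atTop Filter.atTop) :
    ∃ (G : List ℕ → ℕ) (tG : ℕ → ℕ → ℕ), NoisyNonUniformGen G L tG ∧
      ∀ n c, tG n c ≤ max (sInf {j : ℕ | gridIdx n c + 1 ≤ f j}) (R.mstar (n, c) + 1) := by
  classical
  have hDmem : ∀ (w : List ℕ) (e : ℕ × ℕ), e ∈ Dset L R f w ↔
      (∃ l < f w.toFinset.card, ent l = e) ∧ AContains (L e.2) e.1 w.toFinset ∧
        R.mstar e < w.toFinset.card := by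
    intro w e
    simp [Dset, Finset.mem_filter, List.mem_toFinset, List.mem_map, List.mem_range, and_assoc]
  refine ⟨Galg L R f, fun n c => max (sInf {j : ℕ | gridIdx n c + 1 ≤ f j}) (R.mstar (n, c) + 1),
    ?_, fun n c => le_rfl⟩
  intro c n x hx t ht hcard
  obtain ⟨hall, hNfin, hNcard⟩ := hx
  set w : List ℕ := inputList x t with hw
  have hwS : w.toFinset = Sfin x t := rfl
  set S : Finset ℕ := Sfin x t with hS
  -- the true entry is consistent
  have hcons : AContains (L c) n S := by
    rw [AContains]
    have hsub : (↑S : Set ℕ) \ L c ⊆ x '' {t' : ℕ | x t' ∉ L c} := by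
      rintro y ⟨hyS, hyL⟩
      have : y ∈ (inputList x t).toFinset := hyS
      rw [List.mem_toFinset, inputList, List.mem_map] at this
      obtain ⟨i, _, hi⟩ := this
      exact ⟨i, by rw [Set.mem_setOf_eq, hi]; exact hyL, hi⟩
    calc ((↑S : Set ℕ) \ L c).ncard ≤ (x '' {t' : ℕ | x t' ∉ L c}).ncard :=
          Set.ncard_le_ncard hsub (hNfin.image x)
      _ ≤ {t' : ℕ | x t' ∉ L c}.ncard := Set.ncard_image_le hNfin
      _ ≤ n := hNcard
  -- cardinality facts
  have hgs : sInf {j : ℕ | gridIdx n c + 1 ≤ f j} ≤ S.card := le_trans (le_max_left _ _) hcard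
  have hms : R.mstar (n, c) < S.card := by
    have := le_trans (le_max_right _ _) hcard
    omega
  have hfs : gridIdx n c + 1 ≤ f S.card := by
    have hne : {j : ℕ | gridIdx n c + 1 ≤ f j}.Nonempty := by
      obtain ⟨j, hj⟩ := (hftop.eventually_ge_atTop (gridIdx n c + 1)).exists
      exact ⟨j, hj⟩
    have h1 : gridIdx n c + 1 ≤ f (sInf {j : ℕ | gridIdx n c + 1 ≤ f j}) := Nat.sInf_mem hne
    exact le_trans h1 (hf hgs)
  -- the true entry is in Dset
  have hmemD : (n, c) ∈ Dset L R f w := by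
    rw [hDmem]
    refine ⟨⟨gridIdx n c, ?_, ent_gridIdx n c⟩, ?_, ?_⟩
    · rw [hwS]; omega
    · exact hcons
    · rw [hwS]; exact hms
  -- the key claim: the intersection over Dset is infinite
  have hinf : (⋂ e ∈ Dset L R f w, L e.2).Infinite := by
    by_contra hcon
    rw [Set.not_infinite] at hcon
    have hfin' := hcon
    -- pick the last-inserted entry of Dset
    set DD : Finset (ℕ × ℕ) := Dset L R f w with hDD
    have hAne : ((Finset.range (f S.card)).filter (fun l' => ent l' ∈ DD)).Nonempty := by
      refine ⟨gridIdx n c, Finset.mem_filter.mpr ⟨Finset.mem_range.mpr ?_, ?_⟩⟩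
      · omega
      · rw [ent_gridIdx]; exact hmemD
    set l0 : ℕ := ((Finset.range (f S.card)).filter (fun l' => ent l' ∈ DD)).max' hAne with hl0
    have hl0mem := Finset.max'_mem _ hAne
    rw [← hl0, Finset.mem_filter] at hl0mem
    set e0 : ℕ × ℕ := ent l0 with he0
    have he0D : e0 ∈ DD := hl0mem.2
    -- all other entries of DD appear in ord l0
    have hothers : ∀ p ∈ DD, p = e0 ∨ p ∈ R.ord l0 := by
      intro p hp
      obtain ⟨⟨l', hl', hl'p⟩, -, -⟩ := (hDmem w p).mp hp
      have hl'A : l' ∈ (Finset.range (f S.card)).filter (fun l'' => ent l'' ∈ DD) := by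
        refine Finset.mem_filter.mpr ⟨Finset.mem_range.mpr ?_, ?_⟩
        · rw [hwS] at hl'; omega
        · rw [hl'p]; exact hp
      have hle : l' ≤ l0 := Finset.le_max' _ _ hl'A
      rcases Nat.lt_or_ge l' l0 with h | h
      · exact Or.inr (hl'p ▸ mem_ord_of_lt R h)
      · have : l' = l0 := by omega
        exact Or.inl (by rw [← hl'p, this])
    -- the prefix predicate
    have hQl0 : ∀ p ∈ DD, p = e0 ∨ p ∈ (R.ord l0).take l0 := by
      intro p hp
      rcases hothers p hp with h | h
      · exact Or.inl h
      · right
        rwa [List.take_of_length_le (le_of_eq (ord_length R l0))]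
    have hQex : ∃ q, ∀ p ∈ DD, p = e0 ∨ p ∈ (R.ord l0).take q := ⟨l0, hQl0⟩
    set q0 : ℕ := Nat.find hQex with hq0
    have hQ : ∀ p ∈ DD, p = e0 ∨ p ∈ (R.ord l0).take q0 := Nat.find_spec hQex
    have hq0le : q0 ≤ l0 := Nat.find_le hQl0
    -- validity of (DD, S) with respect to a sufficient prefix
    have hvalid : ∀ pre : List (ℕ × ℕ), (∀ p ∈ DD, p = e0 ∨ p ∈ pre) →
        ValidSubN L pre e0 DD S := by
      intro pre hpre
      refine ⟨he0D, hpre, ?_, ?_⟩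
      · intro p hp
        have := ((hDmem w p).mp hp).2.1
        rwa [hwS] at this
      · exact hfin'
    rcases Nat.lt_or_ge (R.pos l0) q0 with hcase | hcase
    · -- the entry moved past position q0; use `moved`
      obtain ⟨m, hm⟩ := exists_mchk L ((R.ord l0).take q0) e0
      have hmle := R.moved l0 q0 hcase hq0le m hm
      have hsm : S.card ≤ m := by
        rcases hm with ⟨hno, -⟩ | ⟨-, hub⟩
        · exact absurd ⟨DD, S, hvalid _ hQ⟩ hno
        · exact hub DD S (hvalid _ hQ)
      -- identify the element at position q0 - 1 and show it lies in DD
      have hq0pos : 1 ≤ q0 := by omega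
      have hnotQ : ¬ ∀ p ∈ DD, p = e0 ∨ p ∈ (R.ord l0).take (q0 - 1) :=
        Nat.find_min hQex (by omega)
      push_neg at hnotQ
      obtain ⟨p, hpD, hpne, hpnot⟩ := hnotQ
      have hpq0 : p ∈ (R.ord l0).take q0 := (hQ p hpD).resolve_left hpne
      have hpe1 : (R.ord l0).getD (q0 - 1) (0, 0) = p := by
        have hq0eq : q0 = (q0 - 1) + 1 := by omega
        rw [hq0eq, List.take_succ] at hpq0
        rcases List.mem_append.mp hpq0 with h | h
        · exact absurd h hpnot
        · rw [List.getD_eq_getElem?_getD]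
          rcases h' : (R.ord l0)[q0 - 1]? with _ | v
          · rw [h'] at h; simp at h
          · rw [h'] at h
            simp only [Option.toList_some, List.mem_singleton] at h
            simp [h]
      have : R.mstar p < S.card := by
        have := ((hDmem w p).mp hpD).2.2
        rwa [hwS] at this
      rw [hpe1] at hmle
      omega
    · -- the entry stopped at `pos l0 ≥ q0`; use `wit_spec`
      have hpre : ∀ p ∈ DD, p = e0 ∨ p ∈ (R.ord l0).take (R.pos l0) := by
        intro p hp
        rcases hQ p hp with h | h
        · exact Or.inl h
        · right
          have : (R.ord l0).take q0 = ((R.ord l0).take (R.pos l0)).take q0 := by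
            rw [List.take_take, min_eq_left hcase]
          rw [this] at h
          exact List.take_subset _ _ h
      have hwit := R.wit_spec l0
      rcases hwit with ⟨hno, -⟩ | ⟨-, -, hub⟩
      · exact absurd ⟨DD, S, hvalid _ hpre⟩ hno
      · have hcard' : S.card ≤ R.mstar (ent l0) := hub DD S (hvalid _ hpre)
        have : R.mstar e0 < S.card := by
          have := ((hDmem w e0).mp he0D).2.2
          rwa [hwS] at this
        rw [← he0] at hcard'
        omega
  -- conclude
  have hne : ((⋂ e ∈ Dset L R f w, L e.2) \ ↑w.toFinset).Nonempty := by
    refine Set.Infinite.nonempty ?_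
    exact hinf.diff (Set.toFinite _)
  have hGmem := Galg_spec L R f w hne
  rw [hwS] at hGmem
  refine ⟨?_, hGmem.2⟩
  have := hGmem.1
  rw [Set.mem_iInter₂] at this
  exact this (n, c) hmemD
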